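/- Let X be a bounded complex random variable such that E[Xⁿ conj(X)ᵐ] = E[Xⁿ]·E[conj(X)ᵐ] for all nonnegative integers m, n. Then X is almost surely constant. -/

import Mathlib

open MeasureTheory Complex

/-- A bounded complex random variable whose mixed moments factorize,
`E[Xⁿ conj(X)ᵐ] = E[Xⁿ]·E[conj(X)ᵐ]` for all `m, n`, is a.s. constant. -/
theorem stmt_4 {Ω : Type*} [MeasurableSpace Ω] (μ : Measure Ω)
    [IsProbabilityMeasure μ] (X : Ω → ℂ) (hX : Measurable X)
    (hXb : ∃ C : ℝ, ∀ᵐ ω ∂μ, ‖X ω‖ ≤ C)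
    (hcov : ∀ m n : ℕ,
      ∫ ω, X ω ^ n * (starRingEnd ℂ) (X ω) ^ m ∂μ
        = (∫ ω, X ω ^ n ∂μ) * ∫ ω, (starRingEnd ℂ) (X ω) ^ m ∂μ) :
    ∃ c : ℂ, ∀ᵐ ω ∂μ, X ω = c := by
  obtain ⟨C, hC⟩ := hXb
  have hC' : ∀ᵐ ω ∂μ, ‖X ω‖ ≤ |C| := by
    filter_upwards [hC] with ω h using h.trans (le_abs_self C)
  set c : ℂ := ∫ ω, X ω ∂μ with hc
  have hXint : Integrable X μ :=
    ⟨hX.aestronglyMeasurable, HasFiniteIntegral.of_bounded hC'⟩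
  have hconjmeas : Measurable fun ω => (starRingEnd ℂ) (X ω) :=
    continuous_star.measurable.comp hX
  have hconjint : Integrable (fun ω => (starRingEnd ℂ) (X ω)) μ := by
    refine ⟨hconjmeas.aestronglyMeasurable, HasFiniteIntegral.of_bounded (C := |C|) ?_⟩
    filter_upwards [hC'] with ω h
    simpa using h
  have hmulint : Integrable (fun ω => X ω * (starRingEnd ℂ) (X ω)) μ := by
    refine ⟨(hX.mul hconjmeas).aestronglyMeasurable,
      HasFiniteIntegral.of_bounded (C := |C| * |C|) ?_⟩
    filter_upwards [hC'] with ω h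
    rw [norm_mul]
    have h2 : ‖(starRingEnd ℂ) (X ω)‖ ≤ |C| := by simpa using h
    exact mul_le_mul h h2 (norm_nonneg _) (abs_nonneg C)
  have h11 := hcov 1 1
  simp only [pow_one] at h11
  have hconjeq : (∫ ω, (starRingEnd ℂ) (X ω) ∂μ) = (starRingEnd ℂ) c := by
    rw [hc, ← integral_conj]
  have key : ∫ ω, (X ω - c) * (starRingEnd ℂ) (X ω - c) ∂μ = 0 := by
    have hexp : ∀ ω, (X ω - c) * (starRingEnd ℂ) (X ω - c)
        = X ω * (starRingEnd ℂ) (X ω) - c * (starRingEnd ℂ) (X ω)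
          - (starRingEnd ℂ) c * X ω + c * (starRingEnd ℂ) c := by
      intro ω; rw [map_sub]; ring
    have i1 : Integrable (fun ω => X ω * (starRingEnd ℂ) (X ω)
        - c * (starRingEnd ℂ) (X ω)) μ := hmulint.sub (hconjint.const_mul c)
    have i2 : Integrable (fun ω => X ω * (starRingEnd ℂ) (X ω)
        - c * (starRingEnd ℂ) (X ω) - (starRingEnd ℂ) c * X ω) μ :=
      i1.sub (hXint.const_mul _)
    simp_rw [hexp]
    rw [integral_add i2 (integrable_const _),
      integral_sub i1 (hXint.const_mul _),
      integral_sub hmulint (hconjint.const_mul c),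
      integral_const_mul, integral_const_mul, integral_const, probReal_univ]
    rw [h11, hconjeq, ← hc]
    simp; ring
  have hsqint : Integrable (fun ω => Complex.normSq (X ω - c)) μ := by
    refine ⟨(Complex.continuous_normSq.measurable.comp (hX.sub measurable_const)).aestronglyMeasurable,
      HasFiniteIntegral.of_bounded (C := (|C| + ‖c‖) ^ 2) ?_⟩
    filter_upwards [hC'] with ω h
    have h1 : ‖X ω - c‖ ≤ |C| + ‖c‖ := (norm_sub_le _ _).trans (by linarith)
    have := Complex.normSq_eq_norm_sq (X ω - c)
    rw [Real.norm_eq_abs, _root_.abs_of_nonneg (Complex.normSq_nonneg _), Complex.normSq_eq_norm_sq]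
    calc ‖X ω - c‖ ^ 2 = ‖X ω - c‖ ^ 2 := by rfl
      _ ≤ (|C| + ‖c‖) ^ 2 := by
        apply pow_le_pow_left₀ (norm_nonneg _) h1
  have key2 : ∫ ω, Complex.normSq (X ω - c) ∂μ = 0 := by
    have h0 : ∫ ω, ((Complex.normSq (X ω - c) : ℝ) : ℂ) ∂μ = 0 := by
      rw [← key]
      congr 1
      funext ω
      rw [Complex.mul_conj]
    have h1 : ∫ ω, ((Complex.normSq (X ω - c) : ℝ) : ℂ) ∂μ
        = ((∫ ω, Complex.normSq (X ω - c) ∂μ : ℝ) : ℂ) := by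
      simpa using ContinuousLinearMap.integral_comp_comm Complex.ofRealCLM hsqint
    rw [h1] at h0
    exact_mod_cast h0
  have hnn : 0 ≤ᵐ[μ] fun ω => Complex.normSq (X ω - c) :=
    Filter.Eventually.of_forall fun ω => Complex.normSq_nonneg _
  have hzero := (integral_eq_zero_iff_of_nonneg_ae hnn hsqint).mp key2
  refine ⟨c, ?_⟩
  filter_upwards [hzero] with ω h
  have : Complex.normSq (X ω - c) = 0 := h
  exact sub_eq_zero.mp (Complex.normSq_eq_zero.mp this)
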